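/- For an odd prime p, the constant term of the minimal polynomial of 2cos(π/(2p)) is C(2p, 0) = (-1)^{(p-1)/2} · p. -/

import Mathlib

open Real Polynomial IntermediateField

private lemma dickson_coeffs' (k : ℕ) :
    (dickson 1 (1:ℚ) (2*k)).coeff 0 = 2 * (-1)^k ∧
    (dickson 1 (1:ℚ) (2*k+1)).coeff 0 = 0 ∧
    (dickson 1 (1:ℚ) (2*k+1)).coeff 1 = (-1)^k * (2*k+1) := by
  induction k with
  | zero => norm_num [Polynomial.dickson]
  | succ n ih =>
    obtain ⟨h0, h1, h2⟩ := ih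
    have e2 : 2*(n+1) = 2*n + 2 := by ring
    have e3 : 2*(n+1)+1 = (2*n+1) + 2 := by ring
    have hA : (dickson 1 (1:ℚ) (2*(n+1))).coeff 0 = 2 * (-1)^(n+1) := by
      rw [e2, dickson_add_two]
      simp [coeff_sub, mul_coeff_zero, h0]
      ring
    refine ⟨hA, ?_, ?_⟩
    · rw [e3, dickson_add_two]
      simp [coeff_sub, mul_coeff_zero, h1]
    · rw [e3, dickson_add_two]
      have hxm : ((X : ℚ[X]) * dickson 1 1 (2*n+1+1)).coeff 1
          = (dickson 1 (1:ℚ) (2*n+1+1)).coeff 0 := coeff_X_mul _ 0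
      rw [coeff_sub, hxm]
      have : (2*n+1+1) = 2*(n+1) := by ring
      rw [this, hA]
      simp [h2]
      push_cast
      ring

private lemma dickson_monic' (n : ℕ) :
    (dickson 1 (1:ℚ) (n+1)).Monic ∧ (dickson 1 (1:ℚ) (n+1)).natDegree = n+1 := by
  induction n using Nat.twoStepInduction with
  | zero => simpa using ⟨monic_X, natDegree_X⟩
  | one =>
    have h : dickson 1 (1:ℚ) 2 = X^2 - C 2 := by
      rw [dickson_two]
      simp [map_ofNat]; norm_num
    rw [h]
    exact ⟨monic_X_pow_sub_C 2 (by norm_num), by rw [natDegree_X_pow_sub_C]⟩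
  | more m ih1 ih2 =>
    obtain ⟨hm2, hd2⟩ := ih2
    obtain ⟨hm1, hd1⟩ := ih1
    have hrec : dickson 1 (1:ℚ) (m+2+1) = X * dickson 1 1 (m+1+1) - dickson 1 1 (m+1) := by
      have := dickson_add_two 1 (1:ℚ) (m+1)
      simpa [C_1] using this
    have hXm : (X * dickson 1 (1:ℚ) (m+1+1)).Monic := monic_X.mul hm2
    have hXd : (X * dickson 1 (1:ℚ) (m+1+1)).natDegree = m+3 := by
      rw [natDegree_mul X_ne_zero hm2.ne_zero, natDegree_X, hd2]; omega
    have hlt : (dickson 1 (1:ℚ) (m+1)).degree < (X * dickson 1 (1:ℚ) (m+1+1)).degree := by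
      apply lt_of_le_of_lt (degree_le_natDegree)
      rw [hd1, degree_eq_natDegree hXm.ne_zero, hXd]
      exact_mod_cast by omega
    constructor
    · rw [hrec]; exact hXm.sub_of_left hlt
    · rw [hrec, natDegree_eq_of_degree_eq (degree_sub_eq_left_of_degree_lt hlt), hXd]


private lemma zeta_facts' (p : ℕ) (hp2 : 2 ≤ p) :
    let ζ : ℂ := Complex.exp (2 * ↑Real.pi * Complex.I / ((4*p : ℕ) : ℂ))
    ζ + ζ⁻¹ = ((2 * Real.cos (π / (2 * p)) : ℝ) : ℂ) ∧ ζ ^ p = Complex.I := by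
  intro ζ
  have hpC : ((p:ℂ)) ≠ 0 := by exact_mod_cast (by omega : p ≠ 0)
  have harg : 2 * (Real.pi:ℂ) * Complex.I / ((4*p : ℕ) : ℂ)
      = ((π / (2 * p) : ℝ) : ℂ) * Complex.I := by
    push_cast
    field_simp
    ring
  constructor
  · show Complex.exp _ + (Complex.exp _)⁻¹ = _
    rw [harg, ← Complex.exp_neg, ← neg_mul]
    rw [Complex.exp_mul_I, Complex.exp_mul_I]
    simp only [Complex.cos_neg, Complex.sin_neg, Complex.ofReal_cos]
    push_cast
    ring
  · show Complex.exp _ ^ p = Complex.I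
    rw [← Complex.exp_nat_mul]
    have : (p:ℂ) * (2 * (Real.pi:ℂ) * Complex.I / ((4*p : ℕ) : ℂ))
        = ((π/2 : ℝ) : ℂ) * Complex.I := by
      push_cast; field_simp; ring
    rw [this, Complex.exp_mul_I]
    simp [← Complex.ofReal_cos, ← Complex.ofReal_sin]

set_option maxHeartbeats 2000000 in
set_option synthInstance.maxHeartbeats 400000 in
theorem constant_term_C_two_p (p : ℕ) (hp : p.Prime) (hodd : Odd p) :
    (minpoly ℚ ((2 : ℝ) * Real.cos (π / (2 * p)))).coeff 0 =
      (-1 : ℚ) ^ ((p - 1) / 2) * p := by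
  obtain ⟨k, hk⟩ := hodd
  have hp2 : 2 ≤ p := hp.two_le
  have hk1 : 1 ≤ k := by omega
  set α : ℝ := 2 * Real.cos (π / (2 * p)) with hα
  -- positivity of α
  have hαpos : 0 < α := by
    have h1 : 0 < π / (2*p) := by positivity
    have h2 : π / (2*(p:ℝ)) < π / 2 := by
      apply div_lt_div_of_pos_left pi_pos (by norm_num)
      exact_mod_cast by omega
    have := Real.cos_pos_of_mem_Ioo ⟨by linarith [pi_pos], h2⟩
    rw [hα]; linarith
  set ζ : ℂ := Complex.exp (2 * ↑Real.pi * Complex.I / ((4*p : ℕ) : ℂ)) with hζdef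
  obtain ⟨hsum, hζp⟩ := zeta_facts' p hp2
  have hζ0 : ζ ≠ 0 := Complex.exp_ne_zero _
  have hζprim : IsPrimitiveRoot ζ (4*p) := Complex.isPrimitiveRoot_exp (4*p) (by omega)
  rw [← hζdef] at hsum hζp
  clear_value ζ
  -- the polynomial
  set P : ℚ[X] := dickson 1 1 p with hPdef
  have hPα : Polynomial.aeval ((α:ℝ) : ℂ) P = 0 := by
    rw [aeval_def, ← eval_map, Polynomial.map_dickson, map_one]
    rw [← hsum, dickson_one_one_eval_add_inv ζ ζ⁻¹ (mul_inv_cancel₀ hζ0) p, hζp, inv_pow, hζp,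
      Complex.inv_I]
    ring
  obtain ⟨hPmon, hPdeg⟩ : P.Monic ∧ P.natDegree = p := by
    have := dickson_monic' (p-1)
    rwa [show p - 1 + 1 = p from by omega] at this
  have hP0 : P.coeff 0 = 0 := by
    have := (dickson_coeffs' k).2.1
    rwa [hPdef, hk]
  set W : ℚ[X] := P.divX with hWdef
  have hPW : P = X * W := by
    conv_lhs => rw [← X_mul_divX_add P]
    rw [hP0]; simp; rfl
  have hWne : W ≠ 0 := by
    intro h
    rw [h, mul_zero] at hPW
    exact hPmon.ne_zero hPW
  have hWmon : W.Monic := by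
    have := hPmon; rw [hPW] at this
    exact monic_X.of_mul_monic_left this
  have hWdeg : W.natDegree = p - 1 := by
    have h := hPW
    have : P.natDegree = 1 + W.natDegree := by
      rw [hPW, natDegree_mul X_ne_zero hWne, natDegree_X]
    omega
  have hWα : Polynomial.aeval ((α:ℝ) : ℂ) W = 0 := by
    have hαC : ((α:ℝ):ℂ) ≠ 0 := by exact_mod_cast hαpos.ne'
    rw [hPW] at hPα
    simpa [hαC] using hPα
  have hαint : IsIntegral ℚ ((α:ℝ) : ℂ) := ⟨P, hPmon, by rwa [← aeval_def]⟩
  -- field degree lower bound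
  set E : IntermediateField ℚ ℂ := ℚ⟮((α:ℝ):ℂ)⟯ with hEdef
  set a : E := IntermediateField.AdjoinSimple.gen ℚ ((α:ℝ):ℂ) with hadef
  have hζE : Polynomial.aeval ζ ((X^2 - C a * X + 1 : Polynomial E)) = 0 := by
    have hgen : algebraMap E ℂ a = ((α:ℝ):ℂ) := IntermediateField.AdjoinSimple.algebraMap_gen ℚ _
    simp only [map_add, map_sub, map_mul, map_pow, map_one, aeval_X, aeval_C, hgen]
    rw [← hsum]
    field_simp
    ring
  have hqdeg : ((X^2 - C a * X + 1 : Polynomial E)).natDegree ≤ 2 := by compute_degree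
  have hqne : ((X^2 - C a * X + 1 : Polynomial E)) ≠ 0 := by
    intro h
    have := congrArg (fun q => Polynomial.coeff q 2) h
    simp [coeff_one] at this
  have hζintE : IsIntegral E ζ := by
    have h := hζprim.isIntegral (by omega : 0 < 4*p)
    exact h.tower_top
  haveI hFDE : FiniteDimensional ℚ E := IntermediateField.adjoin.finiteDimensional hαint
  set L : IntermediateField E ℂ := E⟮ζ⟯ with hLdef
  haveI : FiniteDimensional E L := IntermediateField.adjoin.finiteDimensional hζintE
  haveI : FiniteDimensional ℚ L := FiniteDimensional.trans ℚ E L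
  have h1 : Module.finrank E L ≤ 2 := by
    rw [hLdef, IntermediateField.adjoin.finrank hζintE]
    exact le_trans (natDegree_le_natDegree (minpoly.degree_le_of_ne_zero E ζ hqne hζE)) hqdeg
  have h2 : Module.finrank ℚ E * Module.finrank E L = Module.finrank ℚ L :=
    Module.finrank_mul_finrank ℚ E L
  have hζL : ζ ∈ L := IntermediateField.mem_adjoin_simple_self E ζ
  have htot : (4*p).totient = 2*(p-1) := by
    have hcop : Nat.Coprime 4 p := by
      have h2p : Nat.Coprime 2 p := (Nat.coprime_primes Nat.prime_two hp).mpr (by omega)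
      simpa using (Nat.Coprime.pow_left 2 h2p : Nat.Coprime (2^2) p)
    have h4 : Nat.totient 4 = 2 := by decide
    rw [Nat.totient_mul hcop, Nat.totient_prime hp, h4]
  have h3 : (4*p).totient ≤ Module.finrank ℚ L := by
    have hinj : Function.Injective (algebraMap L ℂ) := Subtype.coe_injective
    have hmin : minpoly ℚ (algebraMap L ℂ (⟨ζ, hζL⟩ : L)) = minpoly ℚ (⟨ζ, hζL⟩ : L) :=
      minpoly.algebraMap_eq hinj _
    have hmap : algebraMap L ℂ (⟨ζ, hζL⟩ : L) = ζ := rfl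
    calc (4*p).totient = (minpoly ℚ ζ).natDegree := by
          rw [← Polynomial.cyclotomic_eq_minpoly_rat hζprim (by omega), natDegree_cyclotomic]
      _ = (minpoly ℚ (⟨ζ, hζL⟩ : L)).natDegree := by rw [← hmin, hmap]
      _ ≤ Module.finrank ℚ L := minpoly.natDegree_le _
  have hElow : p - 1 ≤ Module.finrank ℚ E := by
    have : Module.finrank ℚ E * Module.finrank E L ≤ Module.finrank ℚ E * 2 :=
      Nat.mul_le_mul_left _ h1
    rw [h2] at this
    have := le_trans h3 this
    omega
  have hminE : Module.finrank ℚ E = (minpoly ℚ (((α:ℝ)):ℂ)).natDegree :=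
    IntermediateField.adjoin.finrank hαint
  -- minpoly = W
  have hdvd : minpoly ℚ (((α:ℝ)):ℂ) ∣ W := minpoly.dvd ℚ _ hWα
  have hdegle : (minpoly ℚ (((α:ℝ)):ℂ)).natDegree ≤ p - 1 := by
    have := Polynomial.natDegree_le_of_dvd hdvd hWne
    omega
  have hdegeq : (minpoly ℚ (((α:ℝ)):ℂ)).natDegree = p - 1 := by
    rw [hminE] at hElow; omega
  have hMmon : (minpoly ℚ (((α:ℝ)):ℂ)).Monic := minpoly.monic hαint
  have hMW : minpoly ℚ (((α:ℝ)):ℂ) = W := by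
    obtain ⟨c, hc⟩ := hdvd
    have hcne : c ≠ 0 := by
      intro h; rw [h, mul_zero] at hc; exact hWne hc
    have hcdeg : c.natDegree = 0 := by
      have hdeg2 : W.natDegree = (minpoly ℚ (((α:ℝ)):ℂ)).natDegree + c.natDegree := by
        rw [hc, natDegree_mul hMmon.ne_zero hcne]
      omega
    have hcC : c = C (c.coeff 0) := eq_C_of_natDegree_eq_zero hcdeg
    have hlc : W.leadingCoeff = (minpoly ℚ (((α:ℝ)):ℂ)).leadingCoeff * c.leadingCoeff := by
      rw [hc, leadingCoeff_mul]
    rw [hWmon.leadingCoeff, hMmon.leadingCoeff, one_mul, hcC, leadingCoeff_C] at hlc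
    rw [hcC, ← hlc] at hc
    simpa using hc.symm
  -- transfer to ℝ
  have htrans : minpoly ℚ α = minpoly ℚ (((α:ℝ)):ℂ) := by
    have := minpoly.algebraMap_eq (algebraMap ℝ ℂ).injective α (A := ℚ)
    rw [← this]
    norm_num
  rw [htrans, hMW]
  have hcoeff : W.coeff 0 = (-1:ℚ)^k * (2*k+1) := by
    have h := (dickson_coeffs' k).2.2
    have : W.coeff 0 = P.coeff 1 := by rw [hPW, coeff_X_mul]
    rw [this, hPdef, hk]
    exact h
  rw [hcoeff]
  have : (p - 1) / 2 = k := by omega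
  rw [this, hk]
  push_cast
  ring
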